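/- Let F be a temporal forest with latencies and let σ_u be defined using NextHop as in context. For any node (α, ℓ, u) with strict successor (α⁺, ℓ⁺, u⁺) in block 𝓑_{p(u)}, if both NextHop(α, ℓ, u) = (α', ℓ', v) and NextHop(α⁺, ℓ⁺, u⁺) exist, then NextHop(α⁺, ℓ⁺, u⁺) either equals (α', ℓ', v) or follows it in the lexicographic ordering of 𝓑_{p(v)}. -/
import Mathlib


/-- The lexicographic order on the nodes `(α, ℓ, u)` of the successor forest of a
temporal forest with latencies: first by arrival `α`, then by departure `ℓ`,
then by a fixed total order on vertices. -/
def NLt3 {V : Type} [LinearOrder V] (a b : ℤ × ℤ × V) : Prop :=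
  a.1 < b.1 ∨ (a.1 = b.1 ∧ (a.2.1 < b.2.1 ∨ (a.2.1 = b.2.1 ∧ a.2.2 < b.2.2)))

/-- The block `𝓑_v`: all nodes `(α, ℓ, u)` with `p(u) = v` and `(ℓ, α) ∈ λ(e_u)`,
for a rooted forest with parent map `par` and latency labels `lam`. -/
def Block3 {V : Type} (par : V → Option V) (lam : V → Set (ℤ × ℤ)) (v : V) :
    Set (ℤ × ℤ × V) :=
  {x | par x.2.2 = some v ∧ (x.2.1, x.1) ∈ lam x.2.2}

/-- `y` is the strict successor of `x` in `B` w.r.t. the lexicographic order. -/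
def IsStrictSucc3 {V : Type} [LinearOrder V] (B : Set (ℤ × ℤ × V))
    (x y : ℤ × ℤ × V) : Prop :=
  y ∈ B ∧ NLt3 x y ∧ ∀ z ∈ B, NLt3 x z → (y = z ∨ NLt3 y z)

/-- `IsNextHop par lam x y` : for `x = (α, ℓ, u)` with `v = p(u)`,
`y = NextHop(α, ℓ, u)`: the node `(α', ℓ', v)` with `(ℓ', α') ∈ λ(e_v)`,
`ℓ' ≥ α`, minimizing `α'` and breaking ties in favor of the largest `ℓ'`. -/
def IsNextHop {V : Type} (par : V → Option V) (lam : V → Set (ℤ × ℤ))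
    (x y : ℤ × ℤ × V) : Prop :=
  ∃ v, par x.2.2 = some v ∧ y.2.2 = v ∧ (y.2.1, y.1) ∈ lam v ∧ x.1 ≤ y.2.1 ∧
    ∀ p a : ℤ, (p, a) ∈ lam v → x.1 ≤ p → (y.1 < a ∨ (y.1 = a ∧ p ≤ y.2.1))

/-- If `(α⁺, ℓ⁺, u⁺)` is the strict successor of `(α, ℓ, u)` in its block and both
`NextHop(α, ℓ, u)` and `NextHop(α⁺, ℓ⁺, u⁺)` exist, then `NextHop(α⁺, ℓ⁺, u⁺)`
either equals `NextHop(α, ℓ, u)` or follows it in the lexicographic order. -/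
theorem nextHop_monotone {V : Type} [LinearOrder V]
    (par : V → Option V) (lam : V → Set (ℤ × ℤ))
    (hwf : WellFounded fun a b : V => par b = some a)
    (v : V) (x xs y ys : ℤ × ℤ × V) (hv : par x.2.2 = some v)
    (hss : IsStrictSucc3 (Block3 par lam v) x xs)
    (hy : IsNextHop par lam x y) (hys : IsNextHop par lam xs ys) :
    ys = y ∨ NLt3 y ys := by
  obtain ⟨w, hw, hyv, hylam, hxy, hymin⟩ := hy
  obtain ⟨w', hw', hysv, hyslam, hxys, hysmin⟩ := hys
  obtain ⟨⟨hpar, _⟩, hlt, _⟩ := hss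
  rw [hv] at hw; injection hw with hw; subst hw
  rw [hpar] at hw'; injection hw' with hw'; subst hw'
  have hxxs : x.1 ≤ xs.1 := by
    rcases hlt with h | ⟨h, _⟩
    · exact le_of_lt h
    · exact le_of_eq h
  have h1 := hymin ys.2.1 ys.1 hyslam (le_trans hxxs hxys)
  rcases h1 with h | ⟨heq, hle⟩
  · exact Or.inr (Or.inl h)
  · have h2 := hysmin y.2.1 y.1 hylam (le_trans hxys hle)
    rcases h2 with h | ⟨_, hle'⟩
    · omega
    · left
      have : y.2.1 = ys.2.1 := le_antisymm hle' hle
      have hv2 : ys.2.2 = y.2.2 := by rw [hyv, hysv]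
      obtain ⟨a1, a2, a3⟩ := y
      obtain ⟨b1, b2, b3⟩ := ys
      simp_all
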